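/- Let E and F be real normed spaces, Ω ⊆ E an open convex set, δ > 0, θ ∈ (0,1), and k ∈ ℕ. There exists a constant C > 0 (depending only on k) such that for all functions u : Ω → ℝ and T : Ω → F that are k times continuously (Fréchet) differentiable with ‖u‖_{C^{k,θ}} < ∞ and ‖T‖_{C^{k,θ}} < ∞, one has ‖uT‖_{C^{k,θ}} ≤ C · Σ_{p=0}^{k} ( ‖u‖_{C^p}·‖T‖_{C^{k−p,θ}} + ‖u‖_{C^{p,θ}}·‖T‖_{C^{k−p}} ). -/

import Mathlib

open scoped BigOperators

/-- The truncated Hölder seminorm on `Ω ⊆ E` with cut-off `δ`: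
`[g]_θ = sup_{x,y ∈ Ω, 0 < ‖x−y‖ < δ} ‖g(x) − g(y)‖ / ‖x−y‖^θ`. -/
noncomputable def holderSemiOn {E F : Type*} [NormedAddCommGroup E]
    [NormedAddCommGroup F] (δ θ : ℝ) (g : E → F) (Ω : Set E) : ℝ :=
  ⨆ p : {q : E × E // q.1 ∈ Ω ∧ q.2 ∈ Ω ∧ 0 < ‖q.1 - q.2‖ ∧ ‖q.1 - q.2‖ < δ},
    ‖g p.1.1 - g p.1.2‖ / ‖p.1.1 - p.1.2‖ ^ θ

/-- The `C^j` norm on `Ω`: `‖h‖_{C^j} = Σ_{i=0}^{j} sup_Ω ‖D^i h‖`,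
where `D^i` is the `i`-th (within-`Ω`) Fréchet derivative. -/
noncomputable def ckNormOn {E F : Type*} [NormedAddCommGroup E] [NormedSpace ℝ E]
    [NormedAddCommGroup F] [NormedSpace ℝ F] (j : ℕ) (f : E → F) (Ω : Set E) : ℝ :=
  ∑ i ∈ Finset.range (j + 1), ⨆ x : Ω, ‖iteratedFDerivWithin ℝ i f Ω x‖

/-- The `C^{j,θ}` norm on `Ω`: `‖h‖_{C^{j,θ}} = ‖h‖_{C^j} + [D^j h]_θ`. -/
noncomputable def ckHolderNormOn {E F : Type*} [NormedAddCommGroup E] [NormedSpace ℝ E]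
    [NormedAddCommGroup F] [NormedSpace ℝ F] (j : ℕ) (δ θ : ℝ) (f : E → F) (Ω : Set E) : ℝ :=
  ckNormOn j f Ω + holderSemiOn δ θ (iteratedFDerivWithin ℝ j f Ω) Ω


set_option maxHeartbeats 1000000

section CkHolderAux

open Function Set

universe u uD uE uF uG

variable {𝕜 : Type*} [NontriviallyNormedField 𝕜]


variable {𝕜 : Type*} [NontriviallyNormedField 𝕜]

lemma compCMM_sub {ι : Type*} [Fintype ι] {E : ι → Type*} [∀ i, NormedAddCommGroup (E i)]
    [∀ i, NormedSpace 𝕜 (E i)] {G G' : Type*} [NormedAddCommGroup G] [NormedSpace 𝕜 G]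
    [NormedAddCommGroup G'] [NormedSpace 𝕜 G'] (g : G →L[𝕜] G')
    (A B : ContinuousMultilinearMap 𝕜 E G) :
    g.compContinuousMultilinearMap A - g.compContinuousMultilinearMap B
      = g.compContinuousMultilinearMap (A - B) := by
  ext m; simp

lemma norm_iteratedFDerivWithin_zero_sub {E F : Type*} [NormedAddCommGroup E] [NormedSpace 𝕜 E]
    [NormedAddCommGroup F] [NormedSpace 𝕜 F] (f : E → F) (s : Set E) (x y : E) :
    ‖iteratedFDerivWithin 𝕜 0 f s x - iteratedFDerivWithin 𝕜 0 f s y‖ = ‖f x - f y‖ := by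
  rw [iteratedFDerivWithin_zero_eq_comp, comp_apply, comp_apply,
    ← LinearIsometryEquiv.map_sub, LinearIsometryEquiv.norm_map]

lemma norm_iteratedFDerivWithin_fderivWithin_sub {E F : Type*} [NormedAddCommGroup E]
    [NormedSpace 𝕜 E] [NormedAddCommGroup F] [NormedSpace 𝕜 F] {f : E → F} {s : Set E} {x y : E}
    (hs : UniqueDiffOn 𝕜 s) (hx : x ∈ s) (hy : y ∈ s) (n : ℕ) :
    ‖iteratedFDerivWithin 𝕜 n (fderivWithin 𝕜 f s) s x
        - iteratedFDerivWithin 𝕜 n (fderivWithin 𝕜 f s) s y‖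
      = ‖iteratedFDerivWithin 𝕜 (n + 1) f s x - iteratedFDerivWithin 𝕜 (n + 1) f s y‖ := by
  rw [iteratedFDerivWithin_succ_eq_comp_right hs hx, iteratedFDerivWithin_succ_eq_comp_right hs hy,
    comp_apply, comp_apply, ← LinearIsometryEquiv.map_sub, LinearIsometryEquiv.norm_map]

theorem diff_bilinear_aux {Du Eu Fu Gu : Type u}
    [NormedAddCommGroup Du] [NormedSpace 𝕜 Du] [NormedAddCommGroup Eu] [NormedSpace 𝕜 Eu]
    [NormedAddCommGroup Fu] [NormedSpace 𝕜 Fu] [NormedAddCommGroup Gu] [NormedSpace 𝕜 Gu]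
    (B : Eu →L[𝕜] Fu →L[𝕜] Gu) {f : Du → Eu} {g : Du → Fu} {n : ℕ} {s : Set Du} {x y : Du}
    (hf : ContDiffOn 𝕜 n f s) (hg : ContDiffOn 𝕜 n g s) (hs : UniqueDiffOn 𝕜 s)
    (hx : x ∈ s) (hy : y ∈ s) :
    ‖iteratedFDerivWithin 𝕜 n (fun z => B (f z) (g z)) s x
        - iteratedFDerivWithin 𝕜 n (fun z => B (f z) (g z)) s y‖ ≤
      ‖B‖ * ∑ i ∈ Finset.range (n + 1), (n.choose i : ℝ) *
        (‖iteratedFDerivWithin 𝕜 i f s x - iteratedFDerivWithin 𝕜 i f s y‖ *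
            ‖iteratedFDerivWithin 𝕜 (n - i) g s x‖
          + ‖iteratedFDerivWithin 𝕜 i f s y‖ *
            ‖iteratedFDerivWithin 𝕜 (n - i) g s x - iteratedFDerivWithin 𝕜 (n - i) g s y‖) := by
  induction' n with n IH generalizing Eu Fu Gu
  · simp only [norm_iteratedFDerivWithin_zero, norm_iteratedFDerivWithin_zero_sub,
      zero_add, Finset.range_one, Finset.sum_singleton, Nat.choose_self, Nat.cast_one, one_mul,
      Nat.sub_zero]
    have decomp : B (f x) (g x) - B (f y) (g y)
        = B (f x - f y) (g x) + (B (f y)) (g x - g y) := by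
      rw [map_sub, ContinuousLinearMap.sub_apply, map_sub]
      abel
    rw [decomp, mul_add]
    refine (norm_add_le _ _).trans (add_le_add ?_ ?_)
    · exact (B.le_opNorm₂ _ _).trans_eq (mul_assoc _ _ _)
    · refine ((B (f y)).le_opNorm _).trans ?_
      rw [← mul_assoc]
      gcongr
      exact B.le_opNorm _
  · have In : (n : WithTop ℕ∞) + 1 ≤ n.succ := by simp only [Nat.cast_succ, le_refl]
    let norm := @ContinuousLinearMap.hasOpNorm _ _ Eu ((Du →L[𝕜] Fu) →L[𝕜] Du →L[𝕜] Gu) _ _ _ _ _ _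
      (RingHom.id 𝕜)
    have I1 :
        ‖iteratedFDerivWithin 𝕜 n (fun z : Du => B.precompR Du (f z) (fderivWithin 𝕜 g s z)) s x
            - iteratedFDerivWithin 𝕜 n
                (fun z : Du => B.precompR Du (f z) (fderivWithin 𝕜 g s z)) s y‖ ≤
          ‖B‖ * ∑ i ∈ Finset.range (n + 1), (n.choose i : ℝ) *
            (‖iteratedFDerivWithin 𝕜 i f s x - iteratedFDerivWithin 𝕜 i f s y‖ *
                ‖iteratedFDerivWithin 𝕜 (n + 1 - i) g s x‖
              + ‖iteratedFDerivWithin 𝕜 i f s y‖ *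
                ‖iteratedFDerivWithin 𝕜 (n + 1 - i) g s x
                  - iteratedFDerivWithin 𝕜 (n + 1 - i) g s y‖) := by
      refine ((IH _ (hf.of_le (Nat.cast_le.2 (Nat.le_succ n))) (hg.fderivWithin hs In)).trans
        (mul_le_mul_of_nonneg_right (B.norm_precompR_le Du) (by positivity))).trans_eq ?_
      congr 1
      apply Finset.sum_congr rfl fun i hi => ?_
      rw [Nat.succ_sub (Nat.lt_succ_iff.1 (Finset.mem_range.1 hi)),
        ← norm_iteratedFDerivWithin_fderivWithin hs hx,
        ← norm_iteratedFDerivWithin_fderivWithin_sub hs hx hy]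
    let norm := @ContinuousLinearMap.hasOpNorm _ _ (Du →L[𝕜] Eu) (Fu →L[𝕜] Du →L[𝕜] Gu) _ _ _ _ _ _
      (RingHom.id 𝕜)
    have I2 :
        ‖iteratedFDerivWithin 𝕜 n (fun z : Du => B.precompL Du (fderivWithin 𝕜 f s z) (g z)) s x
            - iteratedFDerivWithin 𝕜 n
                (fun z : Du => B.precompL Du (fderivWithin 𝕜 f s z) (g z)) s y‖ ≤
          ‖B‖ * ∑ i ∈ Finset.range (n + 1), (n.choose i : ℝ) *
            (‖iteratedFDerivWithin 𝕜 (i + 1) f s x - iteratedFDerivWithin 𝕜 (i + 1) f s y‖ *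
                ‖iteratedFDerivWithin 𝕜 (n - i) g s x‖
              + ‖iteratedFDerivWithin 𝕜 (i + 1) f s y‖ *
                ‖iteratedFDerivWithin 𝕜 (n - i) g s x
                  - iteratedFDerivWithin 𝕜 (n - i) g s y‖) := by
      refine ((IH _ (hf.fderivWithin hs In) (hg.of_le (Nat.cast_le.2 (Nat.le_succ n)))).trans
        (mul_le_mul_of_nonneg_right (B.norm_precompL_le Du) (by positivity))).trans_eq ?_
      congr 1
      apply Finset.sum_congr rfl fun i _ => ?_
      rw [← norm_iteratedFDerivWithin_fderivWithin hs hy,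
        ← norm_iteratedFDerivWithin_fderivWithin_sub hs hx hy]
    have J : ∀ z ∈ s, iteratedFDerivWithin 𝕜 n
        (fun w : Du => fderivWithin 𝕜 (fun w : Du => B (f w) (g w)) s w) s z =
          iteratedFDerivWithin 𝕜 n (fun w => B.precompR Du (f w)
            (fderivWithin 𝕜 g s w) + B.precompL Du (fderivWithin 𝕜 f s w) (g w)) s z := by
      intro z hz
      apply iteratedFDerivWithin_congr (fun w hw => ?_) hz
      have L : ((n.succ : ℕ) : WithTop ℕ∞) ≠ 0 := by
        exact_mod_cast Nat.succ_ne_zero n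
      exact B.fderivWithin_of_bilinear (hf.differentiableOn L w hw) (hg.differentiableOn L w hw)
        (hs w hw)
    rw [← norm_iteratedFDerivWithin_fderivWithin_sub hs hx hy, J x hx, J y hy]
    have A : ContDiffOn 𝕜 n (fun w => B.precompR Du (f w) (fderivWithin 𝕜 g s w)) s :=
      (B.precompR Du).isBoundedBilinearMap.contDiff.comp₂_contDiffOn
        (hf.of_le (Nat.cast_le.2 (Nat.le_succ n))) (hg.fderivWithin hs In)
    have A' : ContDiffOn 𝕜 n (fun w => B.precompL Du (fderivWithin 𝕜 f s w) (g w)) s :=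
      (B.precompL Du).isBoundedBilinearMap.contDiff.comp₂_contDiffOn (hf.fderivWithin hs In)
        (hg.of_le (Nat.cast_le.2 (Nat.le_succ n)))
    rw [iteratedFDerivWithin_add_apply' (A x hx) (A' x hx) hs hx,
      iteratedFDerivWithin_add_apply' (A y hy) (A' y hy) hs hy]
    have rearr : ∀ a b c d : ContinuousMultilinearMap 𝕜 (fun _ : Fin n => Du) (Du →L[𝕜] Gu),
        a + b - (c + d) = (a - c) + (b - d) := by intro a b c d; abel
    rw [rearr]
    apply (norm_add_le _ _).trans ((add_le_add I1 I2).trans (le_of_eq ?_))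
    rw [← mul_add]
    congr 1
    exact (Finset.sum_choose_succ_mul
      (fun i j => ‖iteratedFDerivWithin 𝕜 i f s x - iteratedFDerivWithin 𝕜 i f s y‖ *
          ‖iteratedFDerivWithin 𝕜 j g s x‖
        + ‖iteratedFDerivWithin 𝕜 i f s y‖ *
          ‖iteratedFDerivWithin 𝕜 j g s x - iteratedFDerivWithin 𝕜 j g s y‖) n).symm

lemma compCLM_sub {ι : Type*} [Fintype ι] {E E' : ι → Type*} [∀ i, NormedAddCommGroup (E i)]
    [∀ i, NormedSpace 𝕜 (E i)] [∀ i, NormedAddCommGroup (E' i)] [∀ i, NormedSpace 𝕜 (E' i)]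
    {G : Type*} [NormedAddCommGroup G] [NormedSpace 𝕜 G]
    (A B : ContinuousMultilinearMap 𝕜 E G) (c : ∀ i, E' i →L[𝕜] E i) :
    (A - B).compContinuousLinearMap c
      = A.compContinuousLinearMap c - B.compContinuousLinearMap c := by
  ext m; simp

section
variable {E : Type uE} [NormedAddCommGroup E] [NormedSpace 𝕜 E]
  {F : Type uF} [NormedAddCommGroup F] [NormedSpace 𝕜 F]
  {G : Type uG} [NormedAddCommGroup G] [NormedSpace 𝕜 G]
  {s : Set E} {x y : E}

/-- difference version of comp_left norm preservation -/
lemma norm_itfd_comp_left_sub (g : F ≃ₗᵢ[𝕜] G) (f : E → F)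
    (hs : UniqueDiffOn 𝕜 s) (hx : x ∈ s) (hy : y ∈ s) (i : ℕ) :
    ‖iteratedFDerivWithin 𝕜 i (⇑g ∘ f) s x - iteratedFDerivWithin 𝕜 i (⇑g ∘ f) s y‖
      = ‖iteratedFDerivWithin 𝕜 i f s x - iteratedFDerivWithin 𝕜 i f s y‖ := by
  have h1 : iteratedFDerivWithin 𝕜 i (⇑g ∘ f) s x =
      (g : F →L[𝕜] G).compContinuousMultilinearMap (iteratedFDerivWithin 𝕜 i f s x) :=
    g.toContinuousLinearEquiv.iteratedFDerivWithin_comp_left f hs hx i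
  have h2 : iteratedFDerivWithin 𝕜 i (⇑g ∘ f) s y =
      (g : F →L[𝕜] G).compContinuousMultilinearMap (iteratedFDerivWithin 𝕜 i f s y) :=
    g.toContinuousLinearEquiv.iteratedFDerivWithin_comp_left f hs hy i
  rw [h1, h2, compCMM_sub]
  apply LinearIsometry.norm_compContinuousMultilinearMap g.toLinearIsometry

/-- difference version of comp_right norm preservation -/
lemma norm_itfd_comp_right_sub (g : G ≃ₗᵢ[𝕜] E) (f : E → F) (hs : UniqueDiffOn 𝕜 s)
    {x y : G} (hx : g x ∈ s) (hy : g y ∈ s) (i : ℕ) :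
    ‖iteratedFDerivWithin 𝕜 i (f ∘ ⇑g) (⇑g ⁻¹' s) x
        - iteratedFDerivWithin 𝕜 i (f ∘ ⇑g) (⇑g ⁻¹' s) y‖
      = ‖iteratedFDerivWithin 𝕜 i f s (g x) - iteratedFDerivWithin 𝕜 i f s (g y)‖ := by
  have h1 : iteratedFDerivWithin 𝕜 i (f ∘ ⇑g) (⇑g ⁻¹' s) x =
      (iteratedFDerivWithin 𝕜 i f s (g x)).compContinuousLinearMap fun _ => g :=
    g.toContinuousLinearEquiv.iteratedFDerivWithin_comp_right f hs hx i
  have h2 : iteratedFDerivWithin 𝕜 i (f ∘ ⇑g) (⇑g ⁻¹' s) y =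
      (iteratedFDerivWithin 𝕜 i f s (g y)).compContinuousLinearMap fun _ => g :=
    g.toContinuousLinearEquiv.iteratedFDerivWithin_comp_right f hs hy i
  rw [h1, h2, ← compCLM_sub]
  exact ContinuousMultilinearMap.norm_compContinuous_linearIsometryEquiv _ fun _ => g
end

theorem diff_bilinear {D : Type uD} [NormedAddCommGroup D] [NormedSpace 𝕜 D]
    {E : Type uE} [NormedAddCommGroup E] [NormedSpace 𝕜 E]
    {F : Type uF} [NormedAddCommGroup F] [NormedSpace 𝕜 F]
    {G : Type uG} [NormedAddCommGroup G] [NormedSpace 𝕜 G]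
    (B : E →L[𝕜] F →L[𝕜] G) {f : D → E} {g : D → F} {n : ℕ} {s : Set D} {x y : D}
    (hf : ContDiffOn 𝕜 n f s) (hg : ContDiffOn 𝕜 n g s) (hs : UniqueDiffOn 𝕜 s)
    (hx : x ∈ s) (hy : y ∈ s) :
    ‖iteratedFDerivWithin 𝕜 n (fun z => B (f z) (g z)) s x
        - iteratedFDerivWithin 𝕜 n (fun z => B (f z) (g z)) s y‖ ≤
      ‖B‖ * ∑ i ∈ Finset.range (n + 1), (n.choose i : ℝ) *
        (‖iteratedFDerivWithin 𝕜 i f s x - iteratedFDerivWithin 𝕜 i f s y‖ *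
            ‖iteratedFDerivWithin 𝕜 (n - i) g s x‖
          + ‖iteratedFDerivWithin 𝕜 i f s y‖ *
            ‖iteratedFDerivWithin 𝕜 (n - i) g s x - iteratedFDerivWithin 𝕜 (n - i) g s y‖) := by
  let Du : Type max uD uE uF uG := ULift.{max uE uF uG, uD} D
  let Eu : Type max uD uE uF uG := ULift.{max uD uF uG, uE} E
  let Fu : Type max uD uE uF uG := ULift.{max uD uE uG, uF} F
  let Gu : Type max uD uE uF uG := ULift.{max uD uE uF, uG} G
  have isoD : Du ≃ₗᵢ[𝕜] D := LinearIsometryEquiv.ulift 𝕜 D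
  have isoE : Eu ≃ₗᵢ[𝕜] E := LinearIsometryEquiv.ulift 𝕜 E
  have isoF : Fu ≃ₗᵢ[𝕜] F := LinearIsometryEquiv.ulift 𝕜 F
  have isoG : Gu ≃ₗᵢ[𝕜] G := LinearIsometryEquiv.ulift 𝕜 G
  set fu : Du → Eu := ⇑isoE.symm ∘ f ∘ ⇑isoD with hfu_def
  set gu : Du → Fu := ⇑isoF.symm ∘ g ∘ ⇑isoD with hgu_def
  set Bu₀ : Eu →L[𝕜] Fu →L[𝕜] G :=
    ((B.comp (isoE : Eu →L[𝕜] E)).flip.comp (isoF : Fu →L[𝕜] F)).flip with hBu₀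
  let Bu : Eu →L[𝕜] Fu →L[𝕜] Gu :=
    ContinuousLinearMap.compL 𝕜 Eu (Fu →L[𝕜] G) (Fu →L[𝕜] Gu)
      (ContinuousLinearMap.compL 𝕜 Fu G Gu (isoG.symm : G →L[𝕜] Gu)) Bu₀
  have hBu : Bu = ContinuousLinearMap.compL 𝕜 Eu (Fu →L[𝕜] G) (Fu →L[𝕜] Gu)
      (ContinuousLinearMap.compL 𝕜 Fu G Gu (isoG.symm : G →L[𝕜] Gu)) Bu₀ := rfl
  have Bu_eq : (fun y => Bu (fu y) (gu y)) = ⇑isoG.symm ∘ (fun y => B (f y) (g y)) ∘ ⇑isoD := by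
    ext1 y
    simp [Bu, hBu₀, hfu_def, hgu_def]
  have Bu_le : ‖Bu‖ ≤ ‖B‖ := by
    refine ContinuousLinearMap.opNorm_le_bound _ (norm_nonneg B) fun y => ?_
    refine ContinuousLinearMap.opNorm_le_bound _ (by positivity) fun z => ?_
    simp only [Bu, hBu₀, ContinuousLinearMap.compL_apply, ContinuousLinearMap.coe_comp',
      Function.comp_apply, ContinuousLinearEquiv.coe_coe, LinearIsometryEquiv.coe_coe,
      ContinuousLinearMap.flip_apply, LinearIsometryEquiv.norm_map]
    calc
      ‖B (isoE y) (isoF z)‖ ≤ ‖B (isoE y)‖ * ‖isoF z‖ := ContinuousLinearMap.le_opNorm _ _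
      _ ≤ ‖B‖ * ‖isoE y‖ * ‖isoF z‖ := by gcongr; apply ContinuousLinearMap.le_opNorm
      _ = ‖B‖ * ‖y‖ * ‖z‖ := by simp only [LinearIsometryEquiv.norm_map]
  let su := ⇑isoD ⁻¹' s
  have hsu : UniqueDiffOn 𝕜 su := isoD.toContinuousLinearEquiv.uniqueDiffOn_preimage_iff.2 hs
  let xu := isoD.symm x
  let yu := isoD.symm y
  have hxu : xu ∈ su := by
    simpa only [xu, su, Set.mem_preimage, LinearIsometryEquiv.apply_symm_apply] using hx
  have hyu : yu ∈ su := by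
    simpa only [yu, su, Set.mem_preimage, LinearIsometryEquiv.apply_symm_apply] using hy
  have xu_x : isoD xu = x := by simp only [xu, LinearIsometryEquiv.apply_symm_apply]
  have yu_y : isoD yu = y := by simp only [yu, LinearIsometryEquiv.apply_symm_apply]
  have hfu : ContDiffOn 𝕜 n fu su :=
    isoE.symm.contDiff.comp_contDiffOn (hf.comp_continuousLinearMap (isoD : Du →L[𝕜] D))
  have hgu : ContDiffOn 𝕜 n gu su :=
    isoF.symm.contDiff.comp_contDiffOn (hg.comp_continuousLinearMap (isoD : Du →L[𝕜] D))
  have Nfu : ∀ i, ‖iteratedFDerivWithin 𝕜 i fu su xu‖ = ‖iteratedFDerivWithin 𝕜 i f s x‖ := by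
    intro i
    rw [LinearIsometryEquiv.norm_iteratedFDerivWithin_comp_left _ _ hsu hxu]
    rw [LinearIsometryEquiv.norm_iteratedFDerivWithin_comp_right _ _ hs, xu_x]
    rwa [← xu_x] at hx
  have Nfu' : ∀ i, ‖iteratedFDerivWithin 𝕜 i fu su yu‖ = ‖iteratedFDerivWithin 𝕜 i f s y‖ := by
    intro i
    rw [LinearIsometryEquiv.norm_iteratedFDerivWithin_comp_left _ _ hsu hyu]
    rw [LinearIsometryEquiv.norm_iteratedFDerivWithin_comp_right _ _ hs, yu_y]
    rwa [← yu_y] at hy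
  have Ngu : ∀ i, ‖iteratedFDerivWithin 𝕜 i gu su xu‖ = ‖iteratedFDerivWithin 𝕜 i g s x‖ := by
    intro i
    rw [LinearIsometryEquiv.norm_iteratedFDerivWithin_comp_left _ _ hsu hxu]
    rw [LinearIsometryEquiv.norm_iteratedFDerivWithin_comp_right _ _ hs, xu_x]
    rwa [← xu_x] at hx
  have Dfu : ∀ i, ‖iteratedFDerivWithin 𝕜 i fu su xu - iteratedFDerivWithin 𝕜 i fu su yu‖
      = ‖iteratedFDerivWithin 𝕜 i f s x - iteratedFDerivWithin 𝕜 i f s y‖ := by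
    intro i
    rw [hfu_def, ← Function.comp_assoc,
      norm_itfd_comp_right_sub (𝕜 := 𝕜) isoD (⇑isoE.symm ∘ f) hs
        (by rwa [xu_x]) (by rwa [yu_y]) i, xu_x, yu_y,
      norm_itfd_comp_left_sub isoE.symm f hs hx hy i]
  have Dgu : ∀ i, ‖iteratedFDerivWithin 𝕜 i gu su xu - iteratedFDerivWithin 𝕜 i gu su yu‖
      = ‖iteratedFDerivWithin 𝕜 i g s x - iteratedFDerivWithin 𝕜 i g s y‖ := by
    intro i
    rw [hgu_def, ← Function.comp_assoc,
      norm_itfd_comp_right_sub (𝕜 := 𝕜) isoD (⇑isoF.symm ∘ g) hs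
        (by rwa [xu_x]) (by rwa [yu_y]) i, xu_x, yu_y,
      norm_itfd_comp_left_sub isoF.symm g hs hx hy i]
  have DBu : ‖iteratedFDerivWithin 𝕜 n (fun z => Bu (fu z) (gu z)) su xu
        - iteratedFDerivWithin 𝕜 n (fun z => Bu (fu z) (gu z)) su yu‖
      = ‖iteratedFDerivWithin 𝕜 n (fun z => B (f z) (g z)) s x
        - iteratedFDerivWithin 𝕜 n (fun z => B (f z) (g z)) s y‖ := by
    rw [Bu_eq, ← Function.comp_assoc,
      norm_itfd_comp_right_sub (𝕜 := 𝕜) isoD (⇑isoG.symm ∘ fun z => B (f z) (g z)) hs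
        (by rwa [xu_x]) (by rwa [yu_y]) n, xu_x, yu_y,
      norm_itfd_comp_left_sub isoG.symm (fun z => B (f z) (g z)) hs hx hy n]
  have main := diff_bilinear_aux (𝕜 := 𝕜) Bu hfu hgu hsu hxu hyu
  simp only [Dfu, Dgu, DBu, Nfu, Nfu', Ngu] at main
  exact main.trans (mul_le_mul_of_nonneg_right Bu_le (by positivity))

end CkHolderAux

section Helpers

variable {E F : Type*} [NormedAddCommGroup E] [NormedSpace ℝ E]
  [NormedAddCommGroup F] [NormedSpace ℝ F]

lemma ckNormOn_nonneg (j : ℕ) (f : E → F) (Ω : Set E) : 0 ≤ ckNormOn j f Ω :=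
  Finset.sum_nonneg fun _ _ => Real.iSup_nonneg fun _ => norm_nonneg _

lemma holderSemiOn_nonneg (δ θ : ℝ) (g : E → F) (Ω : Set E) : 0 ≤ holderSemiOn δ θ g Ω :=
  Real.iSup_nonneg fun _ => div_nonneg (norm_nonneg _) (Real.rpow_nonneg (norm_nonneg _) θ)

lemma ckHolderNormOn_nonneg (j : ℕ) (δ θ : ℝ) (f : E → F) (Ω : Set E) :
    0 ≤ ckHolderNormOn j δ θ f Ω :=
  add_nonneg (ckNormOn_nonneg j f Ω) (holderSemiOn_nonneg δ θ _ Ω)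

lemma sup_le_ckNormOn {i j : ℕ} (hij : i ≤ j) (f : E → F) (Ω : Set E) :
    (⨆ x : Ω, ‖iteratedFDerivWithin ℝ i f Ω x‖) ≤ ckNormOn j f Ω :=
  Finset.single_le_sum (f := fun i => ⨆ x : Ω, ‖iteratedFDerivWithin ℝ i f Ω x‖)
    (fun _ _ => Real.iSup_nonneg fun _ => norm_nonneg _)
    (Finset.mem_range.2 (Nat.lt_succ_of_le hij))

lemma ckNormOn_mono {i j : ℕ} (hij : i ≤ j) (f : E → F) (Ω : Set E) :
    ckNormOn i f Ω ≤ ckNormOn j f Ω :=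
  Finset.sum_le_sum_of_subset_of_nonneg
    (Finset.range_subset_range.2 (by omega))
    (fun _ _ _ => Real.iSup_nonneg fun _ => norm_nonneg _)

lemma ckNormOn_le_ckHolderNormOn (j : ℕ) (δ θ : ℝ) (f : E → F) (Ω : Set E) :
    ckNormOn j f Ω ≤ ckHolderNormOn j δ θ f Ω :=
  le_add_of_nonneg_right (holderSemiOn_nonneg δ θ _ Ω)

lemma holderSemiOn_le_ckHolderNormOn (j : ℕ) (δ θ : ℝ) (f : E → F) (Ω : Set E) :
    holderSemiOn δ θ (iteratedFDerivWithin ℝ j f Ω) Ω ≤ ckHolderNormOn j δ θ f Ω :=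
  le_add_of_nonneg_left (ckNormOn_nonneg j f Ω)

lemma choose_cast_le_two_pow (n i : ℕ) : (n.choose i : ℝ) ≤ 2 ^ n := by
  have h : n.choose i ≤ 2 ^ n := by
    rcases le_or_gt i n with h | h
    · calc n.choose i ≤ ∑ j ∈ Finset.range (n + 1), n.choose j :=
          Finset.single_le_sum (fun _ _ => Nat.zero_le _)
            (Finset.mem_range.2 (Nat.lt_succ_of_le h))
      _ = 2 ^ n := Nat.sum_range_choose n
    · simp [Nat.choose_eq_zero_of_lt h]
  exact_mod_cast h

end Helpers


lemma quot_le_holderSemi {E G : Type*} [NormedAddCommGroup E] [NormedSpace ℝ E]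
    [NormedAddCommGroup G] [NormedSpace ℝ G] {Ω : Set E} {δ θ : ℝ} {k : ℕ}
    (hΩu : UniqueDiffOn ℝ Ω) (hconv : Convex ℝ Ω) (hθ : θ ∈ Set.Ioo (0 : ℝ) 1)
    {f : E → G} (hf : ContDiffOn ℝ k f Ω)
    (hbf : ∀ i ≤ k, BddAbove (Set.range fun x : Ω => ‖iteratedFDerivWithin ℝ i f Ω x‖))
    (hhf : BddAbove (Set.range
      fun p : {q : E × E // q.1 ∈ Ω ∧ q.2 ∈ Ω ∧ 0 < ‖q.1 - q.2‖ ∧ ‖q.1 - q.2‖ < δ} =>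
        ‖iteratedFDerivWithin ℝ k f Ω p.1.1 - iteratedFDerivWithin ℝ k f Ω p.1.2‖ /
          ‖p.1.1 - p.1.2‖ ^ θ)) :
    ∀ i ≤ k, ∀ p : {q : E × E // q.1 ∈ Ω ∧ q.2 ∈ Ω ∧ 0 < ‖q.1 - q.2‖ ∧ ‖q.1 - q.2‖ < δ},
      ‖iteratedFDerivWithin ℝ i f Ω p.1.1 - iteratedFDerivWithin ℝ i f Ω p.1.2‖ /
          ‖p.1.1 - p.1.2‖ ^ θ ≤ holderSemiOn δ θ (iteratedFDerivWithin ℝ i f Ω) Ω := by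
    intro i hik p
    rcases eq_or_lt_of_le hik with rfl | hik'
    · exact le_ciSup hhf p
    · -- MVT bound gives BddAbove
      have hbound : ∀ q : {q : E × E // q.1 ∈ Ω ∧ q.2 ∈ Ω ∧ 0 < ‖q.1 - q.2‖ ∧ ‖q.1 - q.2‖ < δ},
          ‖iteratedFDerivWithin ℝ i f Ω q.1.1 - iteratedFDerivWithin ℝ i f Ω q.1.2‖ /
              ‖q.1.1 - q.1.2‖ ^ θ ≤
            (⨆ x : Ω, ‖iteratedFDerivWithin ℝ (i + 1) f Ω x‖) * δ ^ (1 - θ) := by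
        rintro ⟨⟨x, y⟩, hx, hy, hr0, hrδ⟩
        have hδ : 0 < δ := hr0.trans hrδ
        set M := ⨆ x : Ω, ‖iteratedFDerivWithin ℝ (i + 1) f Ω x‖ with hM
        have hM0 : 0 ≤ M := Real.iSup_nonneg fun _ => norm_nonneg _
        have hdiff : DifferentiableOn ℝ (iteratedFDerivWithin ℝ i f Ω) Ω :=
          hf.differentiableOn_iteratedFDerivWithin (by exact_mod_cast hik') hΩu
        have hb : ∀ z ∈ Ω, ‖fderivWithin ℝ (iteratedFDerivWithin ℝ i f Ω) Ω z‖ ≤ M := by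
          intro z hz
          rw [norm_fderivWithin_iteratedFDerivWithin]
          exact le_ciSup (hbf (i + 1) hik') (⟨z, hz⟩ : Ω)
        have hmvt := Convex.norm_image_sub_le_of_norm_fderivWithin_le hdiff hb hconv hy hx
        have hrθ : (0 : ℝ) < ‖x - y‖ ^ θ := Real.rpow_pos_of_pos hr0 θ
        rw [div_le_iff₀ hrθ]
        have key : ‖x - y‖ ≤ δ ^ (1 - θ) * ‖x - y‖ ^ θ := by
          have h1 : ‖x - y‖ = ‖x - y‖ ^ (1 - θ) * ‖x - y‖ ^ θ := by
            rw [← Real.rpow_add hr0]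
            norm_num
          nth_rewrite 1 [h1]
          have h2 : ‖x - y‖ ^ (1 - θ) ≤ δ ^ (1 - θ) :=
            Real.rpow_le_rpow hr0.le hrδ.le (by linarith [hθ.2])
          exact mul_le_mul_of_nonneg_right h2 hrθ.le
        calc ‖iteratedFDerivWithin ℝ i f Ω x - iteratedFDerivWithin ℝ i f Ω y‖
            ≤ M * ‖x - y‖ := hmvt
          _ ≤ M * (δ ^ (1 - θ) * ‖x - y‖ ^ θ) := mul_le_mul_of_nonneg_left key hM0
          _ = M * δ ^ (1 - θ) * ‖x - y‖ ^ θ := by ring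
      have hbdd : BddAbove (Set.range
          fun q : {q : E × E // q.1 ∈ Ω ∧ q.2 ∈ Ω ∧ 0 < ‖q.1 - q.2‖ ∧ ‖q.1 - q.2‖ < δ} =>
            ‖iteratedFDerivWithin ℝ i f Ω q.1.1 - iteratedFDerivWithin ℝ i f Ω q.1.2‖ /
              ‖q.1.1 - q.1.2‖ ^ θ) :=
        ⟨_, by rintro _ ⟨q, rfl⟩; exact hbound q⟩
      exact le_ciSup hbdd p

/-- Product estimate for `C^{k,θ}` norms on an open convex set: there is `C > 0`
depending only on `k` such that
`‖uT‖_{C^{k,θ}} ≤ C · Σ_{p=0}^{k} (‖u‖_{C^p}·‖T‖_{C^{k−p,θ}} + ‖u‖_{C^{p,θ}}·‖T‖_{C^{k−p}})`. -/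
theorem ck_holder_product_estimate (k : ℕ) :
    ∃ C : ℝ, 0 < C ∧
      ∀ (E F : Type*) [NormedAddCommGroup E] [NormedSpace ℝ E]
        [NormedAddCommGroup F] [NormedSpace ℝ F]
        (Ω : Set E), IsOpen Ω → Convex ℝ Ω →
        ∀ (δ θ : ℝ), 0 < δ → θ ∈ Set.Ioo (0 : ℝ) 1 →
        ∀ (u : E → ℝ) (T : E → F),
          ContDiffOn ℝ k u Ω → ContDiffOn ℝ k T Ω →
          (∀ i ≤ k, BddAbove (Set.range fun x : Ω => ‖iteratedFDerivWithin ℝ i u Ω x‖)) →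
          BddAbove (Set.range
            fun p : {q : E × E // q.1 ∈ Ω ∧ q.2 ∈ Ω ∧ 0 < ‖q.1 - q.2‖ ∧ ‖q.1 - q.2‖ < δ} =>
              ‖iteratedFDerivWithin ℝ k u Ω p.1.1 - iteratedFDerivWithin ℝ k u Ω p.1.2‖ /
                ‖p.1.1 - p.1.2‖ ^ θ) →
          (∀ i ≤ k, BddAbove (Set.range fun x : Ω => ‖iteratedFDerivWithin ℝ i T Ω x‖)) →
          BddAbove (Set.range
            fun p : {q : E × E // q.1 ∈ Ω ∧ q.2 ∈ Ω ∧ 0 < ‖q.1 - q.2‖ ∧ ‖q.1 - q.2‖ < δ} =>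
              ‖iteratedFDerivWithin ℝ k T Ω p.1.1 - iteratedFDerivWithin ℝ k T Ω p.1.2‖ /
                ‖p.1.1 - p.1.2‖ ^ θ) →
          ckHolderNormOn k δ θ (fun x => u x • T x) Ω ≤
            C * ∑ p ∈ Finset.range (k + 1),
              (ckNormOn p u Ω * ckHolderNormOn (k - p) δ θ T Ω +
                ckHolderNormOn p δ θ u Ω * ckNormOn (k - p) T Ω) := by
  
  refine ⟨((k : ℝ) + 2) * 2 ^ k, by positivity, ?_⟩
  intro E F _ _ _ _ Ω hopen hconv δ θ hδ hθ u T hu hT hbu hhu hbT hhT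
  have hΩu : UniqueDiffOn ℝ Ω := hopen.uniqueDiffOn
  set S := ∑ p ∈ Finset.range (k + 1),
      (ckNormOn p u Ω * ckHolderNormOn (k - p) δ θ T Ω +
        ckHolderNormOn p δ θ u Ω * ckNormOn (k - p) T Ω) with hS
  have hterm_nonneg : ∀ p, 0 ≤ ckNormOn p u Ω * ckHolderNormOn (k - p) δ θ T Ω +
      ckHolderNormOn p δ θ u Ω * ckNormOn (k - p) T Ω := fun p =>
    add_nonneg (mul_nonneg (ckNormOn_nonneg _ _ _) (ckHolderNormOn_nonneg _ _ _ _ _))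
      (mul_nonneg (ckHolderNormOn_nonneg _ _ _ _ _) (ckNormOn_nonneg _ _ _))
  have hS_nonneg : 0 ≤ S := Finset.sum_nonneg fun p _ => hterm_nonneg p
  -- pointwise sup bounds
  have hSu : ∀ i ≤ k, ∀ z (hz : z ∈ Ω),
      ‖iteratedFDerivWithin ℝ i u Ω z‖ ≤ ⨆ x : Ω, ‖iteratedFDerivWithin ℝ i u Ω x‖ :=
    fun i hik z hz => le_ciSup (hbu i hik) (⟨z, hz⟩ : Ω)
  have hST : ∀ i ≤ k, ∀ z (hz : z ∈ Ω),
      ‖iteratedFDerivWithin ℝ i T Ω z‖ ≤ ⨆ x : Ω, ‖iteratedFDerivWithin ℝ i T Ω x‖ :=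
    fun i hik z hz => le_ciSup (hbT i hik) (⟨z, hz⟩ : Ω)
  -- Hölder quotient bounds (BddAbove for all orders ≤ k)
  have hQu := quot_le_holderSemi hΩu hconv hθ hu hbu hhu
  have hQT := quot_le_holderSemi hΩu hconv hθ hT hbT hhT
  -- Part 1 : the C^k part
  have part1 : ckNormOn k (fun x => u x • T x) Ω ≤ ((k : ℝ) + 1) * (2 ^ k * S) := by
    rw [ckNormOn]
    have hjle : ∀ j ∈ Finset.range (k + 1),
        (⨆ x : Ω, ‖iteratedFDerivWithin ℝ j (fun x => u x • T x) Ω x‖) ≤ 2 ^ k * S := by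
      intro j hj
      have hjk : j ≤ k := Nat.lt_succ_iff.1 (Finset.mem_range.1 hj)
      refine Real.iSup_le (fun z => ?_) (by positivity)
      obtain ⟨z, hz⟩ := z
      have h1 := norm_iteratedFDerivWithin_smul_le (𝕜 := ℝ) hu hT hΩu hz
        (Nat.cast_le.2 hjk : (j : WithTop ℕ∞) ≤ k)
      refine h1.trans ?_
      have h2 : ∀ i ∈ Finset.range (j + 1),
          (j.choose i : ℝ) * ‖iteratedFDerivWithin ℝ i u Ω z‖ *
              ‖iteratedFDerivWithin ℝ (j - i) T Ω z‖ ≤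
            2 ^ k * (ckNormOn i u Ω * ckHolderNormOn (k - i) δ θ T Ω +
              ckHolderNormOn i δ θ u Ω * ckNormOn (k - i) T Ω) := by
        intro i hi
        have hij : i ≤ j := Nat.lt_succ_iff.1 (Finset.mem_range.1 hi)
        have hik : i ≤ k := hij.trans hjk
        have e1 : ‖iteratedFDerivWithin ℝ i u Ω z‖ ≤ ckNormOn i u Ω :=
          (hSu i hik z hz).trans (sup_le_ckNormOn le_rfl u Ω)
        have e2 : ‖iteratedFDerivWithin ℝ (j - i) T Ω z‖ ≤ ckHolderNormOn (k - i) δ θ T Ω := by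
          refine ((hST (j - i) (by omega) z hz).trans ?_)
          refine (sup_le_ckNormOn (by omega) T Ω).trans
            (ckNormOn_le_ckHolderNormOn (k - i) δ θ T Ω)
        calc (j.choose i : ℝ) * ‖iteratedFDerivWithin ℝ i u Ω z‖ *
              ‖iteratedFDerivWithin ℝ (j - i) T Ω z‖
            ≤ 2 ^ k * ckNormOn i u Ω * ckHolderNormOn (k - i) δ θ T Ω := by
              refine mul_le_mul (mul_le_mul ((choose_cast_le_two_pow j i).trans ?_) e1
                (norm_nonneg _) (by positivity)) e2 (norm_nonneg _) ?_
              · exact pow_le_pow_right₀ one_le_two hjk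
              · exact mul_nonneg (by positivity) (ckNormOn_nonneg _ _ _)
          _ = 2 ^ k * (ckNormOn i u Ω * ckHolderNormOn (k - i) δ θ T Ω) := by ring
          _ ≤ 2 ^ k * (ckNormOn i u Ω * ckHolderNormOn (k - i) δ θ T Ω +
              ckHolderNormOn i δ θ u Ω * ckNormOn (k - i) T Ω) := by
              refine mul_le_mul_of_nonneg_left (le_add_of_nonneg_right ?_) (by positivity)
              exact mul_nonneg (ckHolderNormOn_nonneg _ _ _ _ _) (ckNormOn_nonneg _ _ _)
      refine (Finset.sum_le_sum h2).trans ?_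
      rw [← Finset.mul_sum]
      refine mul_le_mul_of_nonneg_left ?_ (by positivity)
      exact Finset.sum_le_sum_of_subset_of_nonneg
        (Finset.range_subset_range.2 (by omega)) (fun p _ _ => hterm_nonneg p)
    refine (Finset.sum_le_sum hjle).trans ?_
    rw [Finset.sum_const, Finset.card_range, nsmul_eq_mul]
    push_cast
    ring_nf
    exact le_rfl
  -- Part 2 : the Hölder part
  have part2 : holderSemiOn δ θ (iteratedFDerivWithin ℝ k (fun x => u x • T x) Ω) Ω ≤
      2 ^ k * S := by
    refine Real.iSup_le (fun p => ?_) (by positivity)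
    obtain ⟨⟨x, y⟩, hx, hy, hr0, hrδ⟩ := p
    have hrθ : (0 : ℝ) < ‖x - y‖ ^ θ := Real.rpow_pos_of_pos hr0 θ
    rw [div_le_iff₀ hrθ]
    have hB := diff_bilinear (𝕜 := ℝ)
      (ContinuousLinearMap.lsmul ℝ ℝ : ℝ →L[ℝ] F →L[ℝ] F) hu hT hΩu hx hy
    simp only [ContinuousLinearMap.lsmul_apply] at hB
    have hsum_nonneg : (0:ℝ) ≤ ∑ i ∈ Finset.range (k + 1), (k.choose i : ℝ) *
        (‖iteratedFDerivWithin ℝ i u Ω x - iteratedFDerivWithin ℝ i u Ω y‖ *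
            ‖iteratedFDerivWithin ℝ (k - i) T Ω x‖
          + ‖iteratedFDerivWithin ℝ i u Ω y‖ *
            ‖iteratedFDerivWithin ℝ (k - i) T Ω x - iteratedFDerivWithin ℝ (k - i) T Ω y‖) := by
      refine Finset.sum_nonneg fun i _ => ?_
      positivity
    have hB1 : ‖iteratedFDerivWithin ℝ k (fun z => u z • T z) Ω x
        - iteratedFDerivWithin ℝ k (fun z => u z • T z) Ω y‖ ≤
        ∑ i ∈ Finset.range (k + 1), (k.choose i : ℝ) *
        (‖iteratedFDerivWithin ℝ i u Ω x - iteratedFDerivWithin ℝ i u Ω y‖ *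
            ‖iteratedFDerivWithin ℝ (k - i) T Ω x‖
          + ‖iteratedFDerivWithin ℝ i u Ω y‖ *
            ‖iteratedFDerivWithin ℝ (k - i) T Ω x - iteratedFDerivWithin ℝ (k - i) T Ω y‖) := by
      refine hB.trans ?_
      refine mul_le_of_le_one_left hsum_nonneg ContinuousLinearMap.opNorm_lsmul_le
    refine hB1.trans ?_
    have h3 : ∀ i ∈ Finset.range (k + 1), (k.choose i : ℝ) *
        (‖iteratedFDerivWithin ℝ i u Ω x - iteratedFDerivWithin ℝ i u Ω y‖ *
            ‖iteratedFDerivWithin ℝ (k - i) T Ω x‖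
          + ‖iteratedFDerivWithin ℝ i u Ω y‖ *
            ‖iteratedFDerivWithin ℝ (k - i) T Ω x - iteratedFDerivWithin ℝ (k - i) T Ω y‖) ≤
        2 ^ k * ((ckNormOn i u Ω * ckHolderNormOn (k - i) δ θ T Ω +
          ckHolderNormOn i δ θ u Ω * ckNormOn (k - i) T Ω) * ‖x - y‖ ^ θ) := by
      intro i hi
      have hik : i ≤ k := Nat.lt_succ_iff.1 (Finset.mem_range.1 hi)
      set pp : {q : E × E // q.1 ∈ Ω ∧ q.2 ∈ Ω ∧ 0 < ‖q.1 - q.2‖ ∧ ‖q.1 - q.2‖ < δ} :=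
        ⟨(x, y), hx, hy, hr0, hrδ⟩ with hpp
      have hΔu : ‖iteratedFDerivWithin ℝ i u Ω x - iteratedFDerivWithin ℝ i u Ω y‖ ≤
          holderSemiOn δ θ (iteratedFDerivWithin ℝ i u Ω) Ω * ‖x - y‖ ^ θ := by
        have := hQu i hik pp
        rw [div_le_iff₀ hrθ] at this
        exact this
      have hΔT : ‖iteratedFDerivWithin ℝ (k - i) T Ω x -
            iteratedFDerivWithin ℝ (k - i) T Ω y‖ ≤
          holderSemiOn δ θ (iteratedFDerivWithin ℝ (k - i) T Ω) Ω * ‖x - y‖ ^ θ := by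
        have := hQT (k - i) (Nat.sub_le k i) pp
        rw [div_le_iff₀ hrθ] at this
        exact this
      have hbT' : ‖iteratedFDerivWithin ℝ (k - i) T Ω x‖ ≤ ckNormOn (k - i) T Ω :=
        (hST (k - i) (Nat.sub_le k i) x hx).trans (sup_le_ckNormOn le_rfl T Ω)
      have hau : ‖iteratedFDerivWithin ℝ i u Ω y‖ ≤ ckNormOn i u Ω :=
        (hSu i hik y hy).trans (sup_le_ckNormOn le_rfl u Ω)
      have e1 : ‖iteratedFDerivWithin ℝ i u Ω x - iteratedFDerivWithin ℝ i u Ω y‖ *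
            ‖iteratedFDerivWithin ℝ (k - i) T Ω x‖ ≤
          ckHolderNormOn i δ θ u Ω * ckNormOn (k - i) T Ω * ‖x - y‖ ^ θ := by
        calc ‖iteratedFDerivWithin ℝ i u Ω x - iteratedFDerivWithin ℝ i u Ω y‖ *
              ‖iteratedFDerivWithin ℝ (k - i) T Ω x‖
            ≤ (holderSemiOn δ θ (iteratedFDerivWithin ℝ i u Ω) Ω * ‖x - y‖ ^ θ) *
              ckNormOn (k - i) T Ω :=
              mul_le_mul hΔu hbT' (norm_nonneg _)
                (mul_nonneg (holderSemiOn_nonneg _ _ _ _) hrθ.le)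
          _ = holderSemiOn δ θ (iteratedFDerivWithin ℝ i u Ω) Ω * ckNormOn (k - i) T Ω *
              ‖x - y‖ ^ θ := by ring
          _ ≤ ckHolderNormOn i δ θ u Ω * ckNormOn (k - i) T Ω * ‖x - y‖ ^ θ := by
              refine mul_le_mul_of_nonneg_right (mul_le_mul_of_nonneg_right
                (holderSemiOn_le_ckHolderNormOn i δ θ u Ω) (ckNormOn_nonneg _ _ _)) hrθ.le
      have e2 : ‖iteratedFDerivWithin ℝ i u Ω y‖ *
            ‖iteratedFDerivWithin ℝ (k - i) T Ω x - iteratedFDerivWithin ℝ (k - i) T Ω y‖ ≤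
          ckNormOn i u Ω * ckHolderNormOn (k - i) δ θ T Ω * ‖x - y‖ ^ θ := by
        calc ‖iteratedFDerivWithin ℝ i u Ω y‖ *
              ‖iteratedFDerivWithin ℝ (k - i) T Ω x - iteratedFDerivWithin ℝ (k - i) T Ω y‖
            ≤ ckNormOn i u Ω *
              (holderSemiOn δ θ (iteratedFDerivWithin ℝ (k - i) T Ω) Ω * ‖x - y‖ ^ θ) :=
              mul_le_mul hau hΔT (norm_nonneg _) (ckNormOn_nonneg _ _ _)
          _ = ckNormOn i u Ω * holderSemiOn δ θ (iteratedFDerivWithin ℝ (k - i) T Ω) Ω *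
              ‖x - y‖ ^ θ := by ring
          _ ≤ ckNormOn i u Ω * ckHolderNormOn (k - i) δ θ T Ω * ‖x - y‖ ^ θ := by
              refine mul_le_mul_of_nonneg_right (mul_le_mul_of_nonneg_left
                (holderSemiOn_le_ckHolderNormOn (k - i) δ θ T Ω) (ckNormOn_nonneg _ _ _)) hrθ.le
      calc (k.choose i : ℝ) *
            (‖iteratedFDerivWithin ℝ i u Ω x - iteratedFDerivWithin ℝ i u Ω y‖ *
              ‖iteratedFDerivWithin ℝ (k - i) T Ω x‖
            + ‖iteratedFDerivWithin ℝ i u Ω y‖ *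
              ‖iteratedFDerivWithin ℝ (k - i) T Ω x - iteratedFDerivWithin ℝ (k - i) T Ω y‖)
          ≤ 2 ^ k * ((ckHolderNormOn i δ θ u Ω * ckNormOn (k - i) T Ω +
              ckNormOn i u Ω * ckHolderNormOn (k - i) δ θ T Ω) * ‖x - y‖ ^ θ) := by
            refine mul_le_mul (choose_cast_le_two_pow k i) ?_ (by positivity) (by positivity)
            rw [add_mul]
            exact add_le_add e1 e2
        _ = 2 ^ k * ((ckNormOn i u Ω * ckHolderNormOn (k - i) δ θ T Ω +
            ckHolderNormOn i δ θ u Ω * ckNormOn (k - i) T Ω) * ‖x - y‖ ^ θ) := by ring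
    refine (Finset.sum_le_sum h3).trans ?_
    rw [← Finset.mul_sum, ← Finset.sum_mul]
    calc 2 ^ k * (S * ‖x - y‖ ^ θ) = 2 ^ k * S * ‖x - y‖ ^ θ := by ring
      _ ≤ 2 ^ k * S * ‖x - y‖ ^ θ := le_rfl
  -- combine
  rw [ckHolderNormOn]
  calc ckNormOn k (fun x => u x • T x) Ω +
        holderSemiOn δ θ (iteratedFDerivWithin ℝ k (fun x => u x • T x) Ω) Ω
      ≤ ((k : ℝ) + 1) * (2 ^ k * S) + 2 ^ k * S := add_le_add part1 part2
    _ = ((k : ℝ) + 2) * 2 ^ k * S := by ring
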